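/- Let (m,n) be a coprime pair of positive integers and let R be a set of m+n integers with 0 ∈ R. Then R is the rank set of some (m,n)-path if and only if for every ℓ ∈ R, at least one of ℓ+m and ℓ−n belongs to R. -/

import Mathlib

/-- The list of ranks of the lattice points visited by a path (excluding the final
point), starting from rank `r`.  A `true` entry is a north (`u`) step, which adds `m`
to the rank; a `false` entry is an east (`d`) step, which subtracts `n`. -/
def rankWalk (m n : ℤ) : List Bool → ℤ → List ℤ
  | [], _ => []
  | b :: bs, r => r :: rankWalk m n bs (r + if b then m else -n)

/-- An `(m,n)`-path: a word of `n` north steps (`true`) and `m` east steps (`false`). -/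
def IsPathWord (m n : ℕ) (P : List Bool) : Prop :=
  P.length = m + n ∧ P.count true = n

/-- An `(m,n)`-Dyck path: an `(m,n)`-path all of whose ranks are nonnegative. -/
def IsDyckWord (m n : ℕ) (P : List Bool) : Prop :=
  IsPathWord m n P ∧ ∀ r ∈ rankWalk (m : ℤ) (n : ℤ) P 0, 0 ≤ r

/-- The rank set of a path: the ranks of its `m+n` lattice points other than the endpoint. -/
def rankSet (m n : ℕ) (P : List Bool) : Finset ℤ :=
  (rankWalk (m : ℤ) (n : ℤ) P 0).toFinset

/-- `R` is the rank set of some `(m,n)`-path. -/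
def IsRankSet (m n : ℕ) (R : Finset ℤ) : Prop :=
  ∃ P : List Bool, IsPathWord m n P ∧ rankSet m n P = R

/-- `R` is the rank set of some `(m,n)`-Dyck path. -/
def IsDyckRankSet (m n : ℕ) (R : Finset ℤ) : Prop :=
  ∃ P : List Bool, IsDyckWord m n P ∧ rankSet m n P = R

namespace RS

def E (m n : ℤ) (P : List Bool) (r : ℤ) : ℤ :=
  r + m * (P.count true : ℤ) - n * (P.count false : ℤ)

lemma E_cons (m n : ℤ) (b : Bool) (P : List Bool) (r : ℤ) :
    E m n (b :: P) r = E m n P (r + if b then m else -n) := by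
  cases b <;> simp [E, List.count_cons] <;> push_cast <;> ring

lemma self_mem_or_eq_E (m n : ℤ) (P : List Bool) (r : ℤ) :
    r ∈ rankWalk m n P r ∨ r = E m n P r := by
  cases P with
  | nil => right; simp [E]
  | cons b bs => left; rw [rankWalk]; exact List.mem_cons_self

lemma mem_rankWalk_step (m n : ℤ) :
    ∀ (P : List Bool) (r ℓ : ℤ), ℓ ∈ rankWalk m n P r →
      (ℓ + m ∈ rankWalk m n P r ∨ ℓ + m = E m n P r) ∨
      (ℓ - n ∈ rankWalk m n P r ∨ ℓ - n = E m n P r) := by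
  intro P
  induction P with
  | nil => intro r ℓ h; simp [rankWalk] at h
  | cons b bs ih =>
    intro r ℓ h
    rw [rankWalk] at h
    rcases List.mem_cons.mp h with h | h
    · subst h
      cases b with
      | true =>
        left
        rcases self_mem_or_eq_E m n bs (ℓ + m) with h' | h'
        · left; rw [rankWalk]; simp only [if_pos rfl]
          exact List.mem_cons_of_mem _ (by simpa using h')
        · right; rw [E_cons]; simpa using h'
      | false =>
        right
        rcases self_mem_or_eq_E m n bs (ℓ + -n) with h' | h'
        · left; rw [rankWalk]
          refine List.mem_cons_of_mem _ ?_
          simpa [sub_eq_add_neg] using h'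
        · right; rw [E_cons]; simpa [sub_eq_add_neg] using h'
    · rcases ih _ _ h with (h' | h') | (h' | h')
      · exact Or.inl (Or.inl (by rw [rankWalk]; exact List.mem_cons_of_mem _ h'))
      · exact Or.inl (Or.inr (by rw [E_cons]; exact h'))
      · exact Or.inr (Or.inl (by rw [rankWalk]; exact List.mem_cons_of_mem _ h'))
      · exact Or.inr (Or.inr (by rw [E_cons]; exact h'))

lemma rankWalk_iterate (m n : ℤ) (bb : ℤ → Bool) (g : ℤ → ℤ)
    (hg : ∀ x, g x = x + (if bb x then m else -n)) :
    ∀ (k : ℕ) (r : ℤ),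
      rankWalk m n ((List.range k).map (fun i => bb (g^[i] r))) r
        = (List.range k).map (fun i => g^[i] r) := by
  intro k
  induction k with
  | zero => intro r; simp [rankWalk]
  | succ k ih =>
    intro r
    rw [List.range_succ_eq_map, List.map_cons, List.map_cons, List.map_map, List.map_map]
    rw [rankWalk]
    have h1 : ((fun i => bb (g^[i] r)) ∘ Nat.succ) = (fun i => bb (g^[i] (g r))) := by
      funext i; simp [Function.iterate_succ_apply]
    have h2 : ((fun i => g^[i] r) ∘ Nat.succ) = (fun i => g^[i] (g r)) := by
      funext i; simp [Function.iterate_succ_apply]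
    rw [h1, h2]
    have h3 : r + (if bb (g^[0] r) then m else -n) = g r := by
      exact (hg r).symm
    rw [h3]
    simp only [Function.iterate_zero_apply]
    rw [ih (g r)]

lemma E_iterate (m n : ℤ) (bb : ℤ → Bool) (g : ℤ → ℤ)
    (hg : ∀ x, g x = x + (if bb x then m else -n)) :
    ∀ (k : ℕ) (r : ℤ),
      E m n ((List.range k).map (fun i => bb (g^[i] r))) r = g^[k] r := by
  intro k
  induction k with
  | zero => intro r; simp [E]
  | succ k ih =>
    intro r
    rw [List.range_succ_eq_map, List.map_cons, List.map_map]
    have h1 : ((fun i => bb (g^[i] r)) ∘ Nat.succ) = (fun i => bb (g^[i] (g r))) := by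
      funext i; simp [Function.iterate_succ_apply]
    rw [h1, E_cons]
    simp only [Function.iterate_zero_apply]
    exact (congrArg (E m n (List.map (fun i => bb (g^[i] (g r))) (List.range k))) (hg r).symm).trans
      ((ih (g r)).trans (Function.iterate_succ_apply g k r).symm)


lemma count_tf (l : List Bool) : l.count true + l.count false = l.length := by
  induction l with
  | nil => simp
  | cons b bs ih => cases b <;> simp [List.count_cons] <;> omega

end RS

open RS in
theorem rank_set_iff_closed_atLeastOne (m n : ℕ) (hm : 0 < m) (hn : 0 < n)
    (hcop : Nat.Coprime m n) (R : Finset ℤ) (hcard : R.card = m + n)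
    (h0 : (0 : ℤ) ∈ R) :
    IsRankSet m n R ↔ ∀ ℓ ∈ R, ℓ + (m : ℤ) ∈ R ∨ ℓ - (n : ℤ) ∈ R := by
  constructor
  · rintro ⟨P, ⟨hlen, hcnt⟩, hRS⟩ ℓ hℓ
    have hcntf : P.count false = m := by have := count_tf P; omega
    have hE : E (m : ℤ) (n : ℤ) P 0 = 0 := by
      simp [E, hcnt, hcntf]; ring
    have hmem : ℓ ∈ rankWalk (m : ℤ) (n : ℤ) P 0 := by
      rw [← hRS] at hℓ; exact List.mem_toFinset.mp hℓ
    have hsub : ∀ x ∈ rankWalk (m : ℤ) (n : ℤ) P 0, x ∈ R := by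
      intro x hx; rw [← hRS]; exact List.mem_toFinset.mpr hx
    rcases mem_rankWalk_step (m : ℤ) (n : ℤ) P 0 ℓ hmem with (h | h) | (h | h)
    · exact Or.inl (hsub _ h)
    · exact Or.inl (by rw [h, hE]; exact h0)
    · exact Or.inr (hsub _ h)
    · exact Or.inr (by rw [h, hE]; exact h0)
  · intro hcl
    classical
    set g : ℤ → ℤ := fun x => x + (if x + (m : ℤ) ∈ R then (m : ℤ) else -(n : ℤ)) with hgdef
    set bb : ℤ → Bool := fun x => decide (x + (m : ℤ) ∈ R) with hbbdef
    have hg : ∀ x, g x = x + (if bb x then (m : ℤ) else -(n : ℤ)) := by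
      intro x; simp [hgdef, hbbdef]
    have hgR : ∀ x ∈ R, g x ∈ R := by
      intro x hx
      by_cases hx' : x + (m : ℤ) ∈ R
      · simpa [hgdef, hx'] using hx'
      · rcases hcl x hx with h | h
        · exact absurd h hx'
        · simpa [hgdef, hx', sub_eq_add_neg] using h
    have hit : ∀ i : ℕ, g^[i] 0 ∈ R := by
      intro i
      induction i with
      | zero => simpa using h0
      | succ i ih => rw [Function.iterate_succ_apply']; exact hgR _ ih
    have hdvd : ∀ x : ℤ, ((m : ℤ) + n) ∣ g x - x - m := by
      intro x
      by_cases hx' : x + (m : ℤ) ∈ R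
      · simp [hgdef, hx']
      · have : g x - x - m = -((m : ℤ) + n) := by simp [hgdef, hx']; ring
        rw [this]; exact dvd_neg.mpr dvd_rfl
    have hres : ∀ i : ℕ, ((m : ℤ) + n) ∣ g^[i] 0 - i * m := by
      intro i
      induction i with
      | zero => simp
      | succ i ih =>
        rw [Function.iterate_succ_apply']
        have := hdvd (g^[i] 0)
        have h2 := dvd_add this ih
        have heq : g (g^[i] 0) - g^[i] 0 - m + (g^[i] 0 - i * m)
            = g (g^[i] 0) - (i + 1 : ℕ) * m := by push_cast; ring
        rwa [heq] at h2
    have hco : IsCoprime ((m : ℤ) + n) (m : ℤ) := by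
      rw [show ((m : ℤ) + n) = ((m + n : ℕ) : ℤ) by push_cast; ring]
      rw [Nat.isCoprime_iff_coprime]
      simpa using Nat.coprime_add_self_left.mpr hcop.symm
    have hinj : ∀ i j : ℕ, i < m + n → j < m + n → g^[i] 0 = g^[j] 0 → i = j := by
      have key : ∀ i j : ℕ, i ≤ j → j < m + n → g^[i] 0 = g^[j] 0 → i = j := by
        intro i j hij hj he
        have hd : ((m : ℤ) + n) ∣ ((j : ℤ) - i) * m := by
          have h' := dvd_sub (hres i) (hres j)
          rw [he] at h'
          have heq : g^[j] 0 - i * m - (g^[j] 0 - j * m) = ((j : ℤ) - i) * m := by ring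
          rwa [heq] at h'
        have hd2 : ((m : ℤ) + n) ∣ ((j : ℤ) - i) := hco.dvd_of_dvd_mul_right hd
        by_contra hne
        have hpos : (0 : ℤ) < (j : ℤ) - i := by
          have : i < j := lt_of_le_of_ne hij hne; exact_mod_cast by omega
        have := Int.le_of_dvd hpos hd2
        omega
      intro i j hi hj he
      rcases le_total i j with h | h
      · exact key i j h hj he
      · exact (key j i h hi he.symm).symm
    set L : List ℤ := (List.range (m + n)).map (fun i => g^[i] 0) with hLdef
    set P : List Bool := (List.range (m + n)).map (fun i => bb (g^[i] 0)) with hPdef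
    have hwalk : rankWalk (m : ℤ) (n : ℤ) P 0 = L :=
      rankWalk_iterate (m : ℤ) (n : ℤ) bb g hg (m + n) 0
    have hnodup : L.Nodup := by
      refine List.Nodup.map_on ?_ List.nodup_range
      intro i hi j hj he
      exact hinj i j (List.mem_range.mp hi) (List.mem_range.mp hj) he
    have hLsub : L.toFinset ⊆ R := by
      intro x hx
      rw [List.mem_toFinset, hLdef, List.mem_map] at hx
      obtain ⟨i, _, rfl⟩ := hx
      exact hit i
    have hLcard : L.toFinset.card = m + n := by
      rw [List.toFinset_card_of_nodup hnodup, hLdef, List.length_map, List.length_range]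
    have hLR : L.toFinset = R :=
      Finset.eq_of_subset_of_card_le hLsub (by rw [hcard, hLcard])
    have hend : g^[m + n] 0 = 0 := by
      have hmem : g^[m + n] 0 ∈ L.toFinset := by rw [hLR]; exact hit _
      rw [List.mem_toFinset, hLdef, List.mem_map] at hmem
      obtain ⟨j, hj, hje⟩ := hmem
      rw [List.mem_range] at hj
      have hd : ((m : ℤ) + n) ∣ (((m + n : ℕ) : ℤ) - j) * m := by
        have := dvd_sub (hres (m + n)) (hres j)
        rw [← hje] at this
        have heq : g^[j] 0 - (m + n : ℕ) * m - (g^[j] 0 - j * m)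
            = -((((m + n : ℕ) : ℤ) - j) * m) := by push_cast; ring
        rw [heq] at this
        exact (dvd_neg.mp this)
      have hd2 : ((m : ℤ) + n) ∣ (((m + n : ℕ) : ℤ) - j) := hco.dvd_of_dvd_mul_right hd
      have hj0 : j = 0 := by
        have hpos : (0 : ℤ) < ((m + n : ℕ) : ℤ) - j := by push_cast; omega
        have hle := Int.le_of_dvd hpos hd2
        push_cast at hle; omega
      rw [← hje, hj0]; simp
    have hEP : (m : ℤ) * (P.count true : ℤ) - (n : ℤ) * (P.count false : ℤ) = 0 := by
      have := E_iterate (m : ℤ) (n : ℤ) bb g hg (m + n) 0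
      rw [hend] at this
      simpa [E] using this
    have hPlen : P.length = m + n := by rw [hPdef, List.length_map, List.length_range]
    have hcnt : P.count true = n := by
      have htf := count_tf P
      rw [hPlen] at htf
      have h1 : ((m : ℤ) + n) * (P.count true : ℤ) = ((m : ℤ) + n) * n := by
        have hF : (P.count false : ℤ) = (m : ℤ) + n - P.count true := by
          push_cast; omega
        rw [hF] at hEP
        ring_nf
        ring_nf at hEP
        linarith
      have h2 : (P.count true : ℤ) = (n : ℤ) :=
        mul_left_cancel₀ (by positivity) h1
      exact_mod_cast h2
    refine ⟨P, ⟨hPlen, hcnt⟩, ?_⟩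
    rw [rankSet, hwalk, hLR]
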